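/- If after allocating any number of balls via the local search allocation process on a connected graph G, the load difference between any two adjacent vertices is at most 1. Formally, for every k ≥ 0, every vertex v, and every neighbor u of v, |X_v^(k) - X_u^(k)| ≤ 1. -/
import Mathlib


/-- **Smoothness of local search allocation.**
If balls are allocated one by one, each ball being placed on a vertex `p k` that is a
local minimum of the current load vector (no neighbor has strictly smaller load), then
at every time `k` the loads of any two adjacent vertices differ by at most `1`. -/
theorem smoothness_of_local_search {V : Type*} [DecidableEq V] (G : SimpleGraph V)
    (hconn : G.Connected)
    (X : ℕ → V → ℕ) (p : ℕ → V)
    (h0 : ∀ v, X 0 v = 0)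
    (hmin : ∀ k u, G.Adj (p k) u → X k (p k) ≤ X k u)
    (hstep : ∀ k v, X (k + 1) v = X k v + (if v = p k then 1 else 0)) :
    ∀ k v u, G.Adj v u → |(X k v : ℤ) - (X k u : ℤ)| ≤ 1 := by
  intro k
  induction k with
  | zero => intro v u _; simp [h0]
  | succ k ih =>
    intro v u hadj
    have hIH := ih v u hadj
    rw [abs_le] at hIH ⊢
    have hv := hstep k v
    have hu := hstep k u
    by_cases hvp : v = p k
    · have hup : u ≠ p k := fun h => (G.ne_of_adj hadj) (hvp.trans h.symm)
      have hle : X k v ≤ X k u := hvp ▸ hmin k u (hvp ▸ hadj)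
      rw [hv, hu, if_pos hvp, if_neg hup]
      push_cast
      omega
    · by_cases hup : u = p k
      · have hle : X k u ≤ X k v := hup ▸ hmin k v (hup ▸ hadj.symm)
        rw [hv, hu, if_neg hvp, if_pos hup]
        push_cast
        omega
      · rw [hv, hu, if_neg hvp, if_neg hup]; push_cast; omega
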